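/- arXiv:2208.11156 — 2 statements merged into one kernel-verified Lean document; each statement's English description precedes it below -/
import Mathlib

section
/- Let P be a finite poset, K a ring, and f a K-labeling of P with Rf ≠ ⊥, where R is birational rowmotion. Then for each v ∈ P, (Rf)(v) = (Σ_{u ⋖ v in P̂} f(u)) · f(v)⁻¹ · (Σ_{u ⋗ v in P̂} (Rf)(u)⁻¹)⁻¹. -/
open scoped Classical


instance {α : Type*} [Fintype α] : Fintype (WithTop α) :=
  inferInstanceAs (Fintype (Option α))

instance {α : Type*} [Fintype α] : Fintype (WithBot α) :=
  inferInstanceAs (Fintype (Option α))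

/-- The poset `P` with an adjoined global minimum `⊥` (called `0` in the paper) and an
adjoined global maximum `⊤` (called `1` in the paper). -/
abbrev PHat (P : Type*) := WithBot (WithTop P)

/-- The embedding of `P` into `PHat P`. -/
def toPHat {P : Type*} (v : P) : PHat P := ((v : WithTop P) : WithBot (WithTop P))

/-- The birational toggle `T_v` at an element `v ∈ P`, as a partial map (modelled via
`Option`) on `K`-labelings `f : PHat P → K`.  It replaces the label at `v` by
`(∑_{u ⋖ v} f u) * (f v)⁻¹ * (∑_{u ⋗ v} (f u)⁻¹)⁻¹` and leaves all other labels unchanged;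
it is undefined (`none`) whenever any of the required inverses fails to exist. -/
noncomputable def toggle {P : Type*} [PartialOrder P] [Fintype P] {K : Type*} [Ring K]
    (v : P) (f : PHat P → K) : Option (PHat P → K) :=
  if IsUnit (f (toPHat v)) ∧ (∀ u : PHat P, toPHat v ⋖ u → IsUnit (f u)) ∧
      IsUnit (∑ u ∈ Finset.univ.filter (fun u : PHat P => toPHat v ⋖ u), Ring.inverse (f u))
  then some (Function.update f (toPHat v)
      ((∑ u ∈ Finset.univ.filter (fun u : PHat P => u ⋖ toPHat v), f u) *
        Ring.inverse (f (toPHat v)) *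
        Ring.inverse
          (∑ u ∈ Finset.univ.filter (fun u : PHat P => toPHat v ⋖ u), Ring.inverse (f u))))
  else none

/-- `toggleList [v₁, …, vₘ] = T_{v₁} ∘ T_{v₂} ∘ ⋯ ∘ T_{vₘ}` as a partial map
(`T_{vₘ}` is applied first); `⊥ = none` propagates through the composition. -/
noncomputable def toggleList {P : Type*} [PartialOrder P] [Fintype P] {K : Type*} [Ring K] :
    List P → (PHat P → K) → Option (PHat P → K)
  | [], f => some f
  | v :: L, f => (toggleList L f).bind (toggle v)

/-- `rowIter L n` is the `n`-fold iteration `R^n` of birational rowmotion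
`R = toggleList L` (for `L` a linear extension of `P`), as a partial map. -/
noncomputable def rowIter {P : Type*} [PartialOrder P] [Fintype P] {K : Type*} [Ring K]
    (L : List P) : ℕ → (PHat P → K) → Option (PHat P → K)
  | 0, f => some f
  | n + 1, f => (toggleList L f).bind (rowIter L n)

/-- A linear extension of a poset `P`: a list of all elements of `P`, each occurring exactly
once, such that `vᵢ < vⱼ` in `P` implies `i < j`. -/
def IsLinearExtension {P : Type*} [PartialOrder P] (L : List P) : Prop :=
  L.Nodup ∧ (∀ v : P, v ∈ L) ∧ L.Pairwise fun a b => ¬ b < a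

lemma toPHat_lt_toPHat {P : Type*} [PartialOrder P] {a b : P} :
    toPHat a < toPHat b ↔ a < b := by
  simp [toPHat]

lemma toPHat_inj {P : Type*} [PartialOrder P] {a b : P} (h : toPHat a = toPHat b) : a = b := by
  simpa [toPHat] using h

lemma toggle_eq {P : Type*} [PartialOrder P] [Fintype P] {K : Type*} [Ring K]
    {v : P} {f h : PHat P → K} (hh : toggle v f = some h) :
    (IsUnit (f (toPHat v)) ∧ (∀ u : PHat P, toPHat v ⋖ u → IsUnit (f u)) ∧
      IsUnit (∑ u ∈ Finset.univ.filter (fun u : PHat P => toPHat v ⋖ u), Ring.inverse (f u))) ∧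
    h = Function.update f (toPHat v)
      ((∑ u ∈ Finset.univ.filter (fun u : PHat P => u ⋖ toPHat v), f u) *
        Ring.inverse (f (toPHat v)) *
        Ring.inverse
          (∑ u ∈ Finset.univ.filter (fun u : PHat P => toPHat v ⋖ u), Ring.inverse (f u))) := by
  rw [toggle] at hh
  split_ifs at hh with hc
  exact ⟨hc, (Option.some_inj.mp hh).symm⟩

lemma toggleList_apply {P : Type*} [PartialOrder P] [Fintype P] {K : Type*} [Ring K]
    {M : List P} {f h : PHat P → K} (hh : toggleList M f = some h)
    {u : PHat P} (hu : ∀ w ∈ M, u ≠ toPHat w) : h u = f u := by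
  induction M generalizing h with
  | nil => rw [toggleList] at hh; exact congrFun (Option.some_inj.mp hh).symm u
  | cons w M ih =>
    rw [toggleList] at hh
    obtain ⟨h₁, hh₁, htog⟩ := Option.bind_eq_some_iff.mp hh
    obtain ⟨-, rfl⟩ := toggle_eq htog
    rw [Function.update_of_ne (hu w (by simp))]
    exact ih hh₁ fun w' hw' => hu w' (by simp [hw'])

lemma toggleList_append {P : Type*} [PartialOrder P] [Fintype P] {K : Type*} [Ring K]
    (A B : List P) (f : PHat P → K) :
    toggleList (A ++ B) f = (toggleList B f).bind (toggleList A) := by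
  induction A with
  | nil => simp [toggleList]
  | cons a A ih =>
    simp only [List.cons_append, List.append_eq, toggleList, ih, Option.bind_assoc]

/-- If `R f ≠ ⊥` and `v ∈ P`, then all the inverses in the formula below
exist and `(R f)(v) = (∑_{u ⋖ v} f u) * (f v)⁻¹ * (∑_{u ⋗ v} ((R f) u)⁻¹)⁻¹`. -/
theorem stmt11 {P : Type*} [PartialOrder P] [Fintype P] {K : Type*} [Ring K]
    (L : List P) (hL : IsLinearExtension L) (f g : PHat P → K)
    (hfg : toggleList L f = some g) (v : P) :
    IsUnit (f (toPHat v)) ∧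
    (∀ u : PHat P, toPHat v ⋖ u → IsUnit (g u)) ∧
    IsUnit (∑ u ∈ Finset.univ.filter (fun u : PHat P => toPHat v ⋖ u), Ring.inverse (g u)) ∧
    g (toPHat v) =
      (∑ u ∈ Finset.univ.filter (fun u : PHat P => u ⋖ toPHat v), f u) *
        Ring.inverse (f (toPHat v)) *
        Ring.inverse
          (∑ u ∈ Finset.univ.filter (fun u : PHat P => toPHat v ⋖ u), Ring.inverse (g u)) := by
  obtain ⟨hnd, hmem, hpw⟩ := hL
  obtain ⟨L₁, L₂, rfl⟩ := List.append_of_mem (hmem v)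
  rw [toggleList_append] at hfg
  obtain ⟨h, hh, hg⟩ := Option.bind_eq_some_iff.mp hfg
  rw [toggleList] at hh
  obtain ⟨h₀, hh₀, htog⟩ := Option.bind_eq_some_iff.mp hh
  obtain ⟨⟨hu1, hu2, hu3⟩, rfl⟩ := toggle_eq htog
  obtain ⟨-, hnd₂, hdisj⟩ := List.nodup_append.mp hnd
  have hvL₁ : v ∉ L₁ := fun hv => hdisj v hv v (by simp) rfl
  have hvL₂ : v ∉ L₂ := (List.nodup_cons.mp hnd₂).1
  obtain ⟨-, pw₂, hrel⟩ := List.pairwise_append.mp hpw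
  have hL₂lt : ∀ b ∈ L₂, ¬ b < v := (List.pairwise_cons.mp pw₂).1
  have hL₁lt : ∀ a ∈ L₁, ¬ v < a := fun a ha => hrel a ha v (by simp)
  -- h₀ agrees with f at v and at lower covers of v
  have hfv : h₀ (toPHat v) = f (toPHat v) := by
    refine toggleList_apply hh₀ fun w hw he => ?_
    exact hvL₂ (toPHat_inj he ▸ hw)
  have hflow : ∀ u : PHat P, u ⋖ toPHat v → h₀ u = f u := by
    intro u hu
    refine toggleList_apply hh₀ fun w hw he => ?_
    exact hL₂lt w hw (toPHat_lt_toPHat.mp (he ▸ hu.lt))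
  -- g agrees with h (post-toggle) at v and at upper covers of v
  have hgagree : ∀ u : PHat P, (toPHat v ⋖ u ∨ u = toPHat v) →
      g u = Function.update h₀ (toPHat v)
        ((∑ u ∈ Finset.univ.filter (fun u : PHat P => u ⋖ toPHat v), h₀ u) *
          Ring.inverse (h₀ (toPHat v)) *
          Ring.inverse
            (∑ u ∈ Finset.univ.filter (fun u : PHat P => toPHat v ⋖ u), Ring.inverse (h₀ u))) u := by
    intro u hu
    refine toggleList_apply hg fun w hw he => ?_
    rcases hu with hu | rfl
    · exact hL₁lt w hw (toPHat_lt_toPHat.mp (he ▸ hu.lt))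
    · exact hvL₁ (toPHat_inj he ▸ hw)
  have hgup : ∀ u : PHat P, toPHat v ⋖ u → g u = h₀ u := by
    intro u hu
    rw [hgagree u (Or.inl hu), Function.update_of_ne hu.lt.ne']
  have hsum : (∑ u ∈ Finset.univ.filter (fun u : PHat P => toPHat v ⋖ u), Ring.inverse (g u)) =
      ∑ u ∈ Finset.univ.filter (fun u : PHat P => toPHat v ⋖ u), Ring.inverse (h₀ u) := by
    refine Finset.sum_congr rfl fun u hu => ?_
    rw [hgup u (Finset.mem_filter.mp hu).2]
  refine ⟨hfv ▸ hu1, fun u hu => (hgup u hu) ▸ hu2 u hu, hsum ▸ hu3, ?_⟩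
  have hlsum : (∑ u ∈ Finset.univ.filter (fun u : PHat P => u ⋖ toPHat v), h₀ u) =
      ∑ u ∈ Finset.univ.filter (fun u : PHat P => u ⋖ toPHat v), f u :=
    Finset.sum_congr rfl fun u hu => hflow u (Finset.mem_filter.mp hu).2
  rw [hgagree (toPHat v) (Or.inr rfl), Function.update_self, hsum, hfv, hlsum]
end

section
/- Let P = [p] × [q], K a ring, ℓ ≥ 1, and f a K-labeling with R^ℓ f ≠ ⊥. Set a = f(0), b = f(1). Then (R^ℓ f)(1,1) = a · ((R^{ℓ−1} f)(p,q))⁻¹ · b. -/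
open scoped Classical


section Generic
variable {P : Type*} [PartialOrder P] [Fintype P] {K : Type*} [Ring K]

omit [PartialOrder P] [Fintype P] in
lemma toPHat_inj_s17 : Function.Injective (toPHat (P := P)) := by
  intro a b h
  simpa [toPHat] using h

omit [Fintype P] in
lemma toPHat_lt_iff {a b : P} : toPHat a < toPHat b ↔ a < b := by
  simp [toPHat]

/-- The main structural lemma about `toggleList` on a (partial) reverse linear extension. -/
lemma toggleList_spec (L : List P) (hnd : L.Nodup)
    (hpw : L.Pairwise fun a b => ¬ b < a) (f g : PHat P → K)
    (hfg : toggleList L f = some g) :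
    (∀ w : PHat P, (∀ v ∈ L, w ≠ toPHat v) → g w = f w) ∧
    (∀ v ∈ L,
      IsUnit (f (toPHat v)) ∧ (∀ u : PHat P, toPHat v ⋖ u → IsUnit (g u)) ∧
      IsUnit (∑ u ∈ Finset.univ.filter (fun u : PHat P => toPHat v ⋖ u), Ring.inverse (g u)) ∧
      g (toPHat v) =
        (∑ u ∈ Finset.univ.filter (fun u : PHat P => u ⋖ toPHat v), f u) *
          Ring.inverse (f (toPHat v)) *
          Ring.inverse
            (∑ u ∈ Finset.univ.filter (fun u : PHat P => toPHat v ⋖ u), Ring.inverse (g u))) := by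
  induction L generalizing g with
  | nil =>
    simp only [toggleList, Option.some_inj] at hfg
    subst hfg
    exact ⟨fun w _ => rfl, fun v hv => absurd hv List.not_mem_nil⟩
  | cons v L ih =>
    simp only [toggleList, Option.bind_eq_some_iff] at hfg
    obtain ⟨g₁, hg₁, htog⟩ := hfg
    have hnd' : L.Nodup := hnd.of_cons
    have hvL : v ∉ L := (List.nodup_cons.1 hnd).1
    have hpw' : L.Pairwise fun a b => ¬ b < a := hpw.of_cons
    have hpwv : ∀ b ∈ L, ¬ b < v := (List.pairwise_cons.1 hpw).1
    obtain ⟨IH1, IH2⟩ := ih hnd' hpw' g₁ hg₁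
    rw [toggle] at htog
    split_ifs at htog with hcond
    obtain ⟨hu1, hu2, hu3⟩ := hcond
    simp only [Option.some_inj] at htog
    -- value of g₁ at toPHat v is the original one
    have hg₁v : g₁ (toPHat v) = f (toPHat v) := by
      apply IH1
      intro w hw h
      have hvw := toPHat_inj_s17 h
      subst hvw
      exact hvL hw
    -- g agrees with g₁ away from toPHat v
    have hgne : ∀ w : PHat P, w ≠ toPHat v → g w = g₁ w := by
      intro w hw
      rw [← htog]
      exact Function.update_of_ne hw _ _
    have hgv : g (toPHat v) = (∑ u ∈ Finset.univ.filter (fun u : PHat P => u ⋖ toPHat v), g₁ u) *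
        Ring.inverse (g₁ (toPHat v)) *
        Ring.inverse (∑ u ∈ Finset.univ.filter (fun u : PHat P => toPHat v ⋖ u),
          Ring.inverse (g₁ u)) := by
      rw [← htog]
      exact Function.update_self _ _ _
    -- upper covers of toPHat v keep their g₁ values in g
    have hupper : ∀ u : PHat P, toPHat v ⋖ u → g u = g₁ u := by
      intro u hu
      exact hgne u (fun h => (lt_irrefl _ (h ▸ hu.lt)))
    have hsumup : (∑ u ∈ Finset.univ.filter (fun u : PHat P => toPHat v ⋖ u),
        Ring.inverse (g u)) = ∑ u ∈ Finset.univ.filter (fun u : PHat P => toPHat v ⋖ u),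
        Ring.inverse (g₁ u) := by
      apply Finset.sum_congr rfl
      intro u hu
      rw [hupper u (Finset.mem_filter.1 hu).2]
    -- lower covers of toPHat v still have original values in g₁
    have hsumlow : (∑ u ∈ Finset.univ.filter (fun u : PHat P => u ⋖ toPHat v), g₁ u) =
        ∑ u ∈ Finset.univ.filter (fun u : PHat P => u ⋖ toPHat v), f u := by
      apply Finset.sum_congr rfl
      intro u hu
      apply IH1
      intro w hw h
      have : toPHat w < toPHat v := h ▸ (Finset.mem_filter.1 hu).2.lt
      exact hpwv w hw (toPHat_lt_iff.1 this)
    constructor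
    · intro w hw
      have hwv : w ≠ toPHat v := hw v (List.mem_cons_self (a := v) (l := L))
      rw [hgne w hwv]
      exact IH1 w fun u hu => hw u (List.mem_cons_of_mem v hu)
    · intro w hw
      rcases List.mem_cons.1 hw with rfl | hwL
      · -- the element v itself
        refine ⟨hg₁v ▸ hu1, ?_, ?_, ?_⟩
        · intro u hu
          rw [hupper u hu]
          exact hu2 u hu
        · rw [hsumup]
          exact hu3
        · rw [hgv, hsumup, hsumlow, hg₁v]
      · -- an element of L, toggled earlier
        obtain ⟨h1, h2, h3, h4⟩ := IH2 w hwL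
        have hwv : w ≠ v := fun h => hvL (h ▸ hwL)
        have hno : ∀ u : PHat P, toPHat w ⋖ u → u ≠ toPHat v := by
          intro u hu h
          have : toPHat w < toPHat v := h ▸ hu.lt
          exact hpwv w hwL (toPHat_lt_iff.1 this)
        have hsw : (∑ u ∈ Finset.univ.filter (fun u : PHat P => toPHat w ⋖ u),
            Ring.inverse (g u)) = ∑ u ∈ Finset.univ.filter (fun u : PHat P => toPHat w ⋖ u),
            Ring.inverse (g₁ u) := by
          apply Finset.sum_congr rfl
          intro u hu
          rw [hgne u (hno u (Finset.mem_filter.1 hu).2)]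
        refine ⟨h1, ?_, ?_, ?_⟩
        · intro u hu
          rw [hgne u (hno u hu)]
          exact h2 u hu
        · rw [hsw]; exact h3
        · rw [hgne _ (fun h => hwv (toPHat_inj_s17 h)), hsw]
          exact h4

end Generic


section Generic2
variable {P : Type*} [PartialOrder P] [Fintype P] {K : Type*} [Ring K]

lemma rowIter_succ' (L : List P) (n : ℕ) (f : PHat P → K) :
    rowIter L (n + 1) f = (rowIter L n f).bind (toggleList L) := by
  induction n generalizing f with
  | zero => simp [rowIter]
  | succ n ih =>
    show (toggleList L f).bind (rowIter L (n + 1)) = _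
    have : (rowIter L (n + 1 + 1) : (PHat P → K) → _) = fun f => (toggleList L f).bind (rowIter L (n+1)) := rfl
    calc (toggleList L f).bind (rowIter L (n + 1))
        = (toggleList L f).bind (fun h => (rowIter L n h).bind (toggleList L)) := by
          congr 1
          funext h
          exact ih h
      _ = ((toggleList L f).bind (rowIter L n)).bind (toggleList L) := by
          rw [Option.bind_assoc]
      _ = (rowIter L (n + 1) f).bind (toggleList L) := rfl

lemma toggleList_pres (L : List P) (f g : PHat P → K) (h : toggleList L f = some g)
    (w : PHat P) (hw : ∀ v : P, w ≠ toPHat v) : g w = f w := by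
  induction L generalizing g with
  | nil => simp only [toggleList, Option.some_inj] at h; rw [← h]
  | cons v L ih =>
    simp only [toggleList, Option.bind_eq_some_iff] at h
    obtain ⟨g₁, hg₁, htog⟩ := h
    rw [toggle] at htog
    split_ifs at htog
    simp only [Option.some_inj] at htog
    rw [← htog, Function.update_of_ne (hw v), ih g₁ hg₁]

lemma rowIter_pres (L : List P) (n : ℕ) (f g : PHat P → K) (h : rowIter L n f = some g)
    (w : PHat P) (hw : ∀ v : P, w ≠ toPHat v) : g w = f w := by
  induction n generalizing g with
  | zero => simp only [rowIter, Option.some_inj] at h; rw [← h]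
  | succ n ih =>
    rw [rowIter_succ'] at h
    simp only [Option.bind_eq_some_iff] at h
    obtain ⟨g₁, hg₁, htog⟩ := h
    rw [toggleList_pres L g₁ g htog w hw, ih g₁ hg₁]

lemma bot_ne_toPHat (v : P) : (⊥ : PHat P) ≠ toPHat v := by simp [toPHat]

lemma top_ne_toPHat (v : P) : (⊤ : PHat P) ≠ toPHat v := by
  simp only [toPHat]
  rw [← WithBot.coe_top]
  intro h
  exact WithTop.top_ne_coe (WithBot.coe_injective h)

end Generic2

section RingAux
variable {K : Type*} [Ring K] {a b : K}

lemma inv_mul_rev (ha : IsUnit a) (hb : IsUnit b) :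
    Ring.inverse (a * b) = Ring.inverse b * Ring.inverse a := by
  obtain ⟨ua, rfl⟩ := ha
  obtain ⟨ub, rfl⟩ := hb
  rw [← Units.val_mul, Ring.inverse_unit, Ring.inverse_unit, Ring.inverse_unit, mul_inv_rev,
    Units.val_mul]

lemma inv_inv' (ha : IsUnit a) : Ring.inverse (Ring.inverse a) = a := by
  obtain ⟨ua, rfl⟩ := ha
  rw [Ring.inverse_unit, Ring.inverse_unit, inv_inv]

end RingAux

section Rect
variable {p q : ℕ}

lemma fin_covBy_iff {n : ℕ} {a b : Fin n} : a ⋖ b ↔ (b : ℕ) = a + 1 := by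
  constructor
  · rintro ⟨hlt, hmid⟩
    rw [Fin.lt_def] at hlt
    by_contra h
    have hb : (a : ℕ) + 1 < b := by omega
    have h1 : a < (⟨a + 1, by omega⟩ : Fin n) := by rw [Fin.lt_def]; simp
    have h2 : (⟨(a : ℕ) + 1, by omega⟩ : Fin n) < b := by rw [Fin.lt_def]; simpa using hb
    exact hmid h1 h2
  · intro h
    constructor
    · rw [Fin.lt_def]; omega
    · intro c h1 h2
      rw [Fin.lt_def] at h1 h2
      omega

lemma covQ_iff {v u : Fin p × Fin q} : v ⋖ u ↔
    (((u.1 : ℕ) = v.1 + 1 ∧ u.2 = v.2) ∨ ((u.2 : ℕ) = v.2 + 1 ∧ u.1 = v.1)) := by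
  rcases v with ⟨a, b⟩
  rcases u with ⟨c, d⟩
  rw [Prod.mk_covBy_mk_iff]
  simp only [fin_covBy_iff]
  constructor
  · rintro (⟨h1, rfl⟩ | ⟨h1, rfl⟩)
    · exact Or.inl ⟨h1, rfl⟩
    · exact Or.inr ⟨h1, rfl⟩
  · rintro (⟨h1, rfl⟩ | ⟨h1, rfl⟩)
    · exact Or.inl ⟨h1, rfl⟩
    · exact Or.inr ⟨h1, rfl⟩

/-- rank function -/
def rk (v : Fin p × Fin q) : ℕ := (v.1 : ℕ) + (v.2 : ℕ)

lemma rk_covQ {v u : Fin p × Fin q} (h : v ⋖ u) : rk u = rk v + 1 := by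
  rcases covQ_iff.1 h with ⟨h1, h2⟩ | ⟨h1, h2⟩ <;>
    simp only [rk] <;> rw [h2] <;> omega

variable (hp : 0 < p) (hq : 0 < q)

lemma le_M (x : Fin p × Fin q) : x ≤ ((⟨p - 1, by omega⟩ : Fin p), (⟨q - 1, by omega⟩ : Fin q)) := by
  constructor <;> · simp only [Fin.le_def]; have := x.1.isLt; have := x.2.isLt; simp; omega

lemma m_le (x : Fin p × Fin q) : ((⟨0, hp⟩ : Fin p), (⟨0, hq⟩ : Fin q)) ≤ x := by
  constructor <;> simp [Fin.le_def]

lemma rk_eq_zero {v : Fin p × Fin q} (h : rk v = 0) :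
    v = ((⟨0, hp⟩ : Fin p), (⟨0, hq⟩ : Fin q)) := by
  simp only [rk] at h
  ext <;> simp <;> omega

lemma rk_le (v : Fin p × Fin q) : rk v ≤ p + q - 2 := by
  have := v.1.isLt; have := v.2.isLt; simp only [rk]; omega

lemma rk_eq_max {v : Fin p × Fin q} (h : rk v = p + q - 2) :
    v = ((⟨p - 1, by omega⟩ : Fin p), (⟨q - 1, by omega⟩ : Fin q)) := by
  have := v.1.isLt; have := v.2.isLt
  simp only [rk] at h
  ext <;> simp <;> omega

lemma rk_M : rk ((⟨p - 1, by omega⟩ : Fin p), (⟨q - 1, by omega⟩ : Fin q)) = p + q - 2 := by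
  simp [rk]; omega

lemma exists_lower {v : Fin p × Fin q} (h : v ≠ ((⟨0, hp⟩ : Fin p), (⟨0, hq⟩ : Fin q))) :
    ∃ w, w ⋖ v := by
  by_cases h1 : (v.1 : ℕ) = 0
  · have h2 : (v.2 : ℕ) ≠ 0 := by
      intro h2
      exact h (by ext <;> simpa)
    refine ⟨(v.1, ⟨(v.2 : ℕ) - 1, by have := v.2.isLt; omega⟩), covQ_iff.2 (Or.inr ⟨?_, rfl⟩)⟩
    show (v.2 : ℕ) = (v.2 : ℕ) - 1 + 1
    omega
  · refine ⟨(⟨(v.1 : ℕ) - 1, by have := v.1.isLt; omega⟩, v.2), covQ_iff.2 (Or.inl ⟨?_, rfl⟩)⟩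
    show (v.1 : ℕ) = (v.1 : ℕ) - 1 + 1
    omega

lemma m_covQ_iff {u : Fin p × Fin q} :
    ((⟨0, hp⟩ : Fin p), (⟨0, hq⟩ : Fin q)) ⋖ u ↔ rk u = 1 := by
  constructor
  · intro h
    have := rk_covQ h
    simp [rk] at this ⊢
    omega
  · intro h
    simp only [rk] at h
    rcases Nat.eq_zero_or_pos (u.2 : ℕ) with h2 | h2
    · exact covQ_iff.2 (Or.inl ⟨by simp only [Fin.val_mk]; omega, by ext; simpa⟩)
    · exact covQ_iff.2 (Or.inr ⟨by simp only [Fin.val_mk]; omega, by ext; simp; omega⟩)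
end Rect

section CoverPHat
variable {P : Type*} [PartialOrder P] {m0 M0 : P}

lemma toPHat_covBy_toPHat {a b : P} : toPHat a ⋖ toPHat b ↔ a ⋖ b := by
  show ((a : WithTop P) : WithBot (WithTop P)) ⋖ ((b : WithTop P) : WithBot (WithTop P)) ↔ _
  rw [WithBot.coe_covBy_coe, WithTop.coe_covBy_coe]

lemma covBy_toPHat_min (hmin : ∀ x, m0 ≤ x) (w : PHat P) : w ⋖ toPHat m0 ↔ w = ⊥ := by
  constructor
  · intro h
    induction w using WithBot.recBotCoe with
    | bot => rfl
    | coe a =>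
      exfalso
      induction a using WithTop.recTopCoe with
      | top =>
        have : ((⊤ : WithTop P) : WithBot (WithTop P)) < ((m0 : WithTop P) : WithBot _) := h.lt
        rw [WithBot.coe_lt_coe] at this
        exact not_top_lt this
      | coe c =>
        have := (toPHat_covBy_toPHat.1 h).lt
        exact absurd (hmin c) (not_le_of_gt this)
  · rintro rfl
    show (⊥ : WithBot (WithTop P)) ⋖ ((m0 : WithTop P) : WithBot _)
    rw [WithBot.bot_covBy_coe]
    intro b hb
    induction b using WithTop.recTopCoe with
    | top => exact absurd (top_le_iff.1 hb) (WithTop.coe_ne_top)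
    | coe c => exact WithTop.coe_le_coe.2 (hmin c)

lemma toPHat_max_covBy (hmax : ∀ x, x ≤ M0) (u : PHat P) : toPHat M0 ⋖ u ↔ u = ⊤ := by
  constructor
  · intro h
    induction u using WithBot.recBotCoe with
    | bot => exact absurd h.lt (by simp)
    | coe a =>
      induction a using WithTop.recTopCoe with
      | top => rfl
      | coe c =>
        have := (toPHat_covBy_toPHat.1 h).lt
        exact absurd (hmax c) (not_le_of_gt this)
  · rintro rfl
    show ((M0 : WithTop P) : WithBot (WithTop P)) ⋖ ((⊤ : WithTop P) : WithBot (WithTop P))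
    rw [WithBot.coe_covBy_coe, WithTop.coe_covBy_top]
    intro b hb
    exact hmax b

lemma covBy_toPHat_of_ne (hmin : ∀ x, m0 ≤ x) {v : P} (hv : v ≠ m0) (w : PHat P) :
    w ⋖ toPHat v ↔ ∃ u : P, u ⋖ v ∧ w = toPHat u := by
  constructor
  · intro h
    induction w using WithBot.recBotCoe with
    | bot =>
      exfalso
      have hmin' : IsMin ((v : WithTop P)) := by
        have := (WithBot.bot_covBy_coe (α := WithTop P)).1 h
        exact this
      have h1 : ((m0 : WithTop P)) ≤ (v : WithTop P) := WithTop.coe_le_coe.2 (hmin v)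
      have h2 := hmin' h1
      exact hv (le_antisymm (WithTop.coe_le_coe.1 h2) (hmin v))
    | coe a =>
      induction a using WithTop.recTopCoe with
      | top =>
        exfalso
        have : ((⊤ : WithTop P) : WithBot (WithTop P)) < ((v : WithTop P) : WithBot _) := h.lt
        rw [WithBot.coe_lt_coe] at this
        exact not_top_lt this
      | coe c => exact ⟨c, toPHat_covBy_toPHat.1 h, rfl⟩
  · rintro ⟨u, hu, rfl⟩
    exact toPHat_covBy_toPHat.2 hu

lemma toPHat_covBy_of_ne (hmax : ∀ x, x ≤ M0) {v : P} (hv : v ≠ M0) (u : PHat P) :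
    toPHat v ⋖ u ↔ ∃ w : P, v ⋖ w ∧ u = toPHat w := by
  constructor
  · intro h
    induction u using WithBot.recBotCoe with
    | bot => exact absurd h.lt (by simp)
    | coe a =>
      induction a using WithTop.recTopCoe with
      | top =>
        exfalso
        have : ((v : WithTop P) : WithBot (WithTop P)) ⋖ ((⊤ : WithTop P) : WithBot _) := h
        rw [WithBot.coe_covBy_coe, WithTop.coe_covBy_top] at this
        exact hv (le_antisymm (hmax v) (this (hmax v)))
      | coe c => exact ⟨c, toPHat_covBy_toPHat.1 h, rfl⟩
  · rintro ⟨w, hw, rfl⟩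
    exact toPHat_covBy_toPHat.2 hw

end CoverPHat

noncomputable def cS {p q : ℕ} {K : Type*} [Ring K] (f : PHat (Fin p × Fin q) → K)
    (v : Fin p × Fin q) : K :=
  ∑ u ∈ Finset.univ.filter (fun u : PHat (Fin p × Fin q) => u ⋖ toPHat v), f u

noncomputable def AS {p q : ℕ} {K : Type*} [Ring K] (g : PHat (Fin p × Fin q) → K)
    (v : Fin p × Fin q) : K :=
  ∑ u ∈ Finset.univ.filter (fun u : PHat (Fin p × Fin q) => toPHat v ⋖ u), Ring.inverse (g u)

theorem rect_main {p q : ℕ} {K : Type*} [Ring K] (hp : 0 < p) (hq : 0 < q)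
    (L : List (Fin p × Fin q)) (hL : IsLinearExtension L)
    (f g : PHat (Fin p × Fin q) → K) (h : toggleList L f = some g) :
    IsUnit (f (toPHat ((⟨p - 1, by omega⟩ : Fin p), (⟨q - 1, by omega⟩ : Fin q)))) ∧
    g (toPHat ((⟨0, hp⟩ : Fin p), (⟨0, hq⟩ : Fin q))) =
      f ⊥ * Ring.inverse (f (toPHat ((⟨p - 1, by omega⟩ : Fin p), (⟨q - 1, by omega⟩ : Fin q)))) *
        f ⊤ := by
  obtain ⟨hnd, hall, hpw⟩ := hL
  obtain ⟨spec1, spec2⟩ := toggleList_spec L hnd hpw f g h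
  obtain ⟨m, hm⟩ : ∃ x : Fin p × Fin q, x = ((⟨0, hp⟩ : Fin p), (⟨0, hq⟩ : Fin q)) := ⟨_, rfl⟩
  obtain ⟨M, hM⟩ : ∃ x : Fin p × Fin q,
      x = ((⟨p - 1, by omega⟩ : Fin p), (⟨q - 1, by omega⟩ : Fin q)) := ⟨_, rfl⟩
  rw [← hm, ← hM]
  have hm_min : ∀ x : Fin p × Fin q, m ≤ x := by rw [hm]; exact m_le hp hq
  have hM_max : ∀ x : Fin p × Fin q, x ≤ M := by rw [hM]; exact le_M hp hq
  have rk_m : rk m = 0 := by rw [hm]; simp [rk]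
  have rk_M' : rk M = p + q - 2 := by rw [hM]; exact rk_M hp hq
  have rk_eq_max' : ∀ v : Fin p × Fin q, rk v = p + q - 2 → v = M := by
    rw [hM]; exact fun v hv => rk_eq_max hp hq hv
  have rk_eq_zero' : ∀ v : Fin p × Fin q, rk v = 0 → v = m := by
    rw [hm]; exact fun v hv => rk_eq_zero hp hq hv
  have exists_lower' : ∀ v : Fin p × Fin q, v ≠ m → ∃ w, w ⋖ v := by
    rw [hm]; exact fun v hv => exists_lower hp hq hv
  have m_covQ_iff' : ∀ u : Fin p × Fin q, (m ⋖ u ↔ rk u = 1) := by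
    rw [hm]; exact fun u => m_covQ_iff hp hq
  have Hv : ∀ v : Fin p × Fin q, _ := fun v => spec2 v (hall v)
  have unit1 : ∀ v : Fin p × Fin q, IsUnit (f (toPHat v)) := fun v => (Hv v).1
  have unit2 : ∀ v : Fin p × Fin q, ∀ u : PHat (Fin p × Fin q), toPHat v ⋖ u → IsUnit (g u) :=
    fun v => (Hv v).2.1
  have unit3 : ∀ v : Fin p × Fin q, IsUnit (AS g v) := fun v => (Hv v).2.2.1
  have eqn : ∀ v : Fin p × Fin q, g (toPHat v) =
      cS f v * Ring.inverse (f (toPHat v)) * Ring.inverse (AS g v) := fun v => (Hv v).2.2.2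
  have gbot : g ⊥ = f ⊥ := spec1 ⊥ (fun v _ => bot_ne_toPHat v)
  have gtop : g ⊤ = f ⊤ := spec1 ⊤ (fun v _ => top_ne_toPHat v)
  have unitTop : IsUnit (f ⊤) := by
    have := unit2 M ⊤ ((toPHat_max_covBy hM_max ⊤).2 rfl)
    rwa [gtop] at this
  -- singleton filters
  have c_m : cS f m = f ⊥ := by
    have S1 : Finset.univ.filter (fun w : PHat (Fin p × Fin q) => w ⋖ toPHat m) = {⊥} := by
      ext w
      simp [covBy_toPHat_min hm_min]
    rw [cS, S1, Finset.sum_singleton]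
  have A_M : AS g M = Ring.inverse (f ⊤) := by
    have S2 : Finset.univ.filter (fun u : PHat (Fin p × Fin q) => toPHat M ⋖ u) = {⊤} := by
      ext u
      simp [toPHat_max_covBy hM_max]
    rw [AS, S2, Finset.sum_singleton, gtop]
  -- image filters
  have csum : ∀ v : Fin p × Fin q, v ≠ m →
      cS f v = ∑ u ∈ Finset.univ.filter (fun u : Fin p × Fin q => u ⋖ v), f (toPHat u) := by
    intro v hv
    have himg : Finset.univ.filter (fun w : PHat (Fin p × Fin q) => w ⋖ toPHat v) =
        (Finset.univ.filter (fun u : Fin p × Fin q => u ⋖ v)).image toPHat := by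
      ext w
      simp only [Finset.mem_filter, Finset.mem_univ, true_and, Finset.mem_image]
      rw [covBy_toPHat_of_ne hm_min hv]
      constructor
      · rintro ⟨u, h1, h2⟩; exact ⟨u, h1, h2.symm⟩
      · rintro ⟨u, h1, h2⟩; exact ⟨u, h1, h2.symm⟩
    rw [cS, himg, Finset.sum_image (fun a _ b _ hab => toPHat_inj_s17 hab)]
  have Asum : ∀ v : Fin p × Fin q, v ≠ M →
      AS g v = ∑ u ∈ Finset.univ.filter (fun u : Fin p × Fin q => v ⋖ u),
        Ring.inverse (g (toPHat u)) := by
    intro v hv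
    have himg : Finset.univ.filter (fun w : PHat (Fin p × Fin q) => toPHat v ⋖ w) =
        (Finset.univ.filter (fun u : Fin p × Fin q => v ⋖ u)).image toPHat := by
      ext w
      simp only [Finset.mem_filter, Finset.mem_univ, true_and, Finset.mem_image]
      rw [toPHat_covBy_of_ne hM_max hv]
      constructor
      · rintro ⟨u, h1, h2⟩; exact ⟨u, h1, h2.symm⟩
      · rintro ⟨u, h1, h2⟩; exact ⟨u, h1, h2.symm⟩
    rw [AS, himg, Finset.sum_image (fun a _ b _ hab => toPHat_inj_s17 hab)]
  have gUnit : ∀ v : Fin p × Fin q, v ≠ m → IsUnit (g (toPHat v)) := by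
    intro v hv
    obtain ⟨w, hw⟩ := exists_lower' v hv
    exact unit2 w _ (toPHat_covBy_toPHat.2 hw)
  have keyA : ∀ v : Fin p × Fin q, v ≠ m →
      Ring.inverse (g (toPHat v)) * cS f v = AS g v * f (toPHat v) := by
    intro v hv
    have E1 : g (toPHat v) * (AS g v * f (toPHat v)) = cS f v := by
      rw [eqn v, mul_assoc (cS f v * Ring.inverse (f (toPHat v))),
        ← mul_assoc (Ring.inverse (AS g v)) (AS g v),
        Ring.inverse_mul_cancel _ (unit3 v), one_mul, mul_assoc,
        Ring.inverse_mul_cancel _ (unit1 v), mul_one]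
    rw [← E1, Ring.inverse_mul_cancel_left _ _ (gUnit v hv)]
  have ne_m_of_rk : ∀ (v : Fin p × Fin q) (k : ℕ), rk v = k → 1 ≤ k → v ≠ m := by
    intro v k h1 h2 h3
    rw [h3, rk_m] at h1
    omega
  -- the telescoping step
  have step : ∀ k, 1 ≤ k → k < p + q - 2 →
      (∑ v ∈ Finset.univ.filter (fun v : Fin p × Fin q => rk v = k),
        Ring.inverse (g (toPHat v)) * cS f v) =
      ∑ v ∈ Finset.univ.filter (fun v : Fin p × Fin q => rk v = k + 1),
        Ring.inverse (g (toPHat v)) * cS f v := by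
    intro k hk1 hk2
    have hrw1 : ∀ v ∈ Finset.univ.filter (fun v : Fin p × Fin q => rk v = k),
        Ring.inverse (g (toPHat v)) * cS f v =
        ∑ u ∈ Finset.univ.filter (fun u : Fin p × Fin q => v ⋖ u),
          Ring.inverse (g (toPHat u)) * f (toPHat v) := by
      intro v hv
      have hrk := (Finset.mem_filter.1 hv).2
      have hvm : v ≠ m := ne_m_of_rk v k hrk hk1
      have hvM : v ≠ M := by
        intro hvM
        rw [hvM, rk_M'] at hrk
        omega
      rw [keyA v hvm, Asum v hvM, Finset.sum_mul]
    rw [Finset.sum_congr rfl hrw1]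
    have hcomm := Finset.sum_comm'
      (s := Finset.univ.filter (fun v : Fin p × Fin q => rk v = k))
      (t := fun v => Finset.univ.filter (fun u : Fin p × Fin q => v ⋖ u))
      (t' := Finset.univ.filter (fun u : Fin p × Fin q => rk u = k + 1))
      (s' := fun u => Finset.univ.filter (fun v : Fin p × Fin q => v ⋖ u))
      (f := fun v u => Ring.inverse (g (toPHat u)) * f (toPHat v))
      (h := by
        intro v u
        simp only [Finset.mem_filter, Finset.mem_univ, true_and]
        constructor
        · rintro ⟨h1, h2⟩
          exact ⟨h2, by rw [rk_covQ h2, h1]⟩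
        · rintro ⟨h1, h2⟩
          have := rk_covQ h1
          exact ⟨by omega, h1⟩)
    rw [hcomm]
    apply Finset.sum_congr rfl
    intro u hu
    have hrk := (Finset.mem_filter.1 hu).2
    have hum : u ≠ m := ne_m_of_rk u (k + 1) hrk (by omega)
    rw [← Finset.mul_sum, ← csum u hum]
  -- chain from rank 1 to rank max
  have chain : ∀ j k, 1 ≤ k → k + j = p + q - 2 →
      (∑ v ∈ Finset.univ.filter (fun v : Fin p × Fin q => rk v = k),
        Ring.inverse (g (toPHat v)) * cS f v) =
      ∑ v ∈ Finset.univ.filter (fun v : Fin p × Fin q => rk v = p + q - 2),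
        Ring.inverse (g (toPHat v)) * cS f v := by
    intro j
    induction j with
    | zero =>
      intro k hk1 hk2
      rw [show k = p + q - 2 by omega]
    | succ j ih =>
      intro k hk1 hk2
      rw [step k hk1 (by omega)]
      exact ih (k + 1) (by omega) (by omega)
  by_cases hmM : m = M
  · -- the one-element poset
    refine ⟨unit1 M, ?_⟩
    have hAm : AS g m = Ring.inverse (f ⊤) := by rw [hmM]; exact A_M
    rw [← hmM, eqn m, c_m, hAm, inv_inv' unitTop]
  · -- at least two elements
    have hmM' : M ≠ m := Ne.symm hmM
    have hrmax1 : 1 ≤ p + q - 2 := by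
      by_contra hc
      have h0 : rk M = 0 := by omega
      exact hmM (rk_eq_zero' M h0).symm
    have SM : Finset.univ.filter (fun v : Fin p × Fin q => rk v = p + q - 2) = {M} := by
      ext v
      simp only [Finset.mem_filter, Finset.mem_univ, true_and, Finset.mem_singleton]
      constructor
      · exact fun h' => rk_eq_max' v h'
      · rintro rfl; exact rk_M'
    have Sr : (∑ v ∈ Finset.univ.filter (fun v : Fin p × Fin q => rk v = p + q - 2),
        Ring.inverse (g (toPHat v)) * cS f v) = Ring.inverse (f ⊤) * f (toPHat M) := by
      rw [SM, Finset.sum_singleton, keyA M hmM', A_M]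
    have crk1 : ∀ v : Fin p × Fin q, rk v = 1 → cS f v = f (toPHat m) := by
      intro v hv
      have hsing : Finset.univ.filter (fun u : Fin p × Fin q => u ⋖ v) = {m} := by
        ext w
        simp only [Finset.mem_filter, Finset.mem_univ, true_and, Finset.mem_singleton]
        constructor
        · intro hw
          have := rk_covQ hw
          exact rk_eq_zero' w (by omega)
        · rintro rfl
          exact (m_covQ_iff' v).2 hv
      rw [csum v (ne_m_of_rk v 1 hv le_rfl), hsing, Finset.sum_singleton]
    have S1' : (∑ v ∈ Finset.univ.filter (fun v : Fin p × Fin q => rk v = 1),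
        Ring.inverse (g (toPHat v)) * cS f v) = AS g m * f (toPHat m) := by
      rw [Finset.sum_congr rfl (fun v hv => by
        rw [crk1 v (Finset.mem_filter.1 hv).2]), ← Finset.sum_mul]
      congr 1
      rw [Asum m (fun h' => hmM h')]
      apply Finset.sum_congr _ (fun _ _ => rfl)
      ext u
      simp only [Finset.mem_filter, Finset.mem_univ, true_and]
      exact ⟨fun h' => (m_covQ_iff' u).2 h', fun h' => (m_covQ_iff' u).1 h'⟩
    have key : AS g m * f (toPHat m) = Ring.inverse (f ⊤) * f (toPHat M) := by
      rw [← S1', chain (p + q - 2 - 1) 1 le_rfl (by omega), Sr]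
    refine ⟨unit1 M, ?_⟩
    rw [eqn m, c_m, mul_assoc (f ⊥), ← inv_mul_rev (unit3 m) (unit1 m), key,
      inv_mul_rev (IsUnit.ringInverse unitTop) (unit1 M), inv_inv' unitTop, ← mul_assoc]


/-- Let `P = [p] × [q]`, `ℓ ≥ 1`, and `f` a `K`-labeling with
`R^ℓ f ≠ ⊥`.  Then `(R^ℓ f)(1,1) = a · ((R^{ℓ-1} f)(p,q))⁻¹ · b` where `a = f(0)`,
`b = f(1)` (and the inverse on the right-hand side exists). -/
theorem stmt17 {p q : ℕ} (hp : 0 < p) (hq : 0 < q) {K : Type*} [Ring K]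
    (L : List (Fin p × Fin q)) (hL : IsLinearExtension L) (ℓ : ℕ) (hℓ : 1 ≤ ℓ)
    (f g : PHat (Fin p × Fin q) → K) (hfg : rowIter L ℓ f = some g) :
    ∃ g' : PHat (Fin p × Fin q) → K,
      rowIter L (ℓ - 1) f = some g' ∧
      IsUnit (g' (toPHat (⟨p - 1, by omega⟩, ⟨q - 1, by omega⟩))) ∧
      g (toPHat (⟨0, hp⟩, ⟨0, hq⟩)) =
        f ⊥ * Ring.inverse (g' (toPHat (⟨p - 1, by omega⟩, ⟨q - 1, by omega⟩))) * f ⊤ := by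
  obtain ⟨n, rfl⟩ : ∃ n, ℓ = n + 1 := ⟨ℓ - 1, by omega⟩
  rw [rowIter_succ'] at hfg
  simp only [Option.bind_eq_some_iff] at hfg
  obtain ⟨g', hg', htog⟩ := hfg
  obtain ⟨hunit, heq⟩ := rect_main hp hq L hL g' g htog
  refine ⟨g', by simpa using hg', hunit, ?_⟩
  rw [heq, rowIter_pres L n f g' hg' ⊥ (fun v => bot_ne_toPHat v),
    rowIter_pres L n f g' hg' ⊤ (fun v => top_ne_toPHat v)]
end
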